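/- Let φ = (1+√5)/2 and let k, n be positive integers with φ·k < n. Then there exists an integer r with k/φ < r < φ·k such that n ≡ r (mod k), and moreover n ≠ r. -/

import Mathlib

noncomputable def phi : ℝ := (1 + Real.sqrt 5) / 2

lemma phi_pos : 0 < phi := by
  have h5 : (0:ℝ) ≤ Real.sqrt 5 := Real.sqrt_nonneg 5
  unfold phi; linarith

lemma phi_irrational : Irrational phi := by
  have h5 : Irrational (Real.sqrt 5) := (by norm_num : Nat.Prime 5).irrational_sqrt
  have h1 : Irrational (1 + Real.sqrt 5) := by simpa using h5.ratCast_add 1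
  simpa [phi] using h1.div_natCast (by norm_num : (2:ℕ) ≠ 0)

lemma phi_sq : phi * phi = phi + 1 := by
  have h5 : Real.sqrt 5 ^ 2 = 5 := Real.sq_sqrt (by norm_num)
  unfold phi; nlinarith [h5]

lemma inv_phi : 1 / phi = phi - 1 := by
  have hp := phi_pos
  field_simp
  nlinarith [phi_sq]

theorem exists_residue_in_losing_interval (k n : ℕ) (hk : 0 < k) (hn : 0 < n)
    (h : phi * k < n) :
    ∃ r : ℤ, (k : ℝ) / phi < (r : ℝ) ∧ (r : ℝ) < phi * k ∧
      (n : ℤ) ≡ r [ZMOD (k : ℤ)] ∧ (n : ℤ) ≠ r := by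
  have hp := phi_pos
  have hkR : (0:ℝ) < (k:ℝ) := by exact_mod_cast hk
  have hkey : (k:ℝ) / phi + k = phi * k := by
    have h1 : (k:ℝ) / phi = k * (1/phi) := by ring
    rw [h1, inv_phi]; ring
  set x : ℝ := (n:ℝ) - (k:ℝ)/phi with hx
  set q : ℤ := ⌊x / k⌋ with hq
  have hA : (k:ℝ) * q ≤ x := by
    have := Int.floor_le (x / k)
    calc (k:ℝ) * q ≤ k * (x / k) := by
          exact mul_le_mul_of_nonneg_left this hkR.le
      _ = x := by field_simp
  have hB : x < (k:ℝ) * (q + 1) := by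
    have := Int.lt_floor_add_one (x / k)
    calc x = k * (x / k) := by field_simp
      _ < (k:ℝ) * (q + 1) := mul_lt_mul_of_pos_left this hkR
  refine ⟨(n:ℤ) - k * q, ?_, ?_, ?_, ?_⟩
  · have hle : (k:ℝ)/phi ≤ (((n:ℤ) - k*q : ℤ):ℝ) := by push_cast; simp only [hx] at hA; linarith
    refine lt_of_le_of_ne hle ?_
    intro heq
    have hirr : Irrational (phi * k) := by
      simpa [mul_comm] using phi_irrational.natCast_mul (m := k) hk.ne'
    have : phi * k = (((n:ℤ) - k*q + k : ℤ):ℝ) := by push_cast at heq ⊢; linarith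
    exact hirr.ne_int _ this
  · have : x < (k:ℝ) * q + k := by linarith [hB]
    simp only [hx] at this
    push_cast
    linarith
  · exact Int.ModEq.symm (Int.modEq_iff_dvd.mpr ⟨q, by ring⟩)
  · intro heq
    have h1 : (((n:ℤ) - k*q : ℤ):ℝ) < phi * k := by
      have : x < (k:ℝ) * q + k := by linarith [hB]
      simp only [hx] at this; push_cast; linarith
    rw [← heq] at h1
    push_cast at h1
    linarith
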